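/- Let M₂⁽ⁿ⁾ be the n×n integer matrix with entries (C(i+j,i) mod 2) for 0 ≤ i,j < n. Then det(M₂⁽ⁿ⁾) = ∏_{k=0}^{n−1} (−1)^{s₂(k)}. -/

import Mathlib

def s2 (n : ℕ) : ℕ := (Nat.digits 2 n).sum

section aux

lemma submask_iff (i k : ℕ) : i &&& k = k ↔ ∀ t, k.testBit t = true → i.testBit t = true := by
  constructor
  · intro h t ht
    have h2 := congrArg (fun x => Nat.testBit x t) h
    simp only [Nat.testBit_land, ht, Bool.and_true] at h2
    exact h2
  · intro h
    apply Nat.eq_of_testBit_eq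
    intro t
    rw [Nat.testBit_land]
    cases hk : k.testBit t
    · simp
    · simp [h t hk]

lemma submask_parity (i k : ℕ) : i &&& k = k ↔ (k % 2 ≤ i % 2 ∧ i / 2 &&& k / 2 = k / 2) := by
  rw [submask_iff, submask_iff]
  constructor
  · intro h
    refine ⟨?_, fun t ht => ?_⟩
    · rcases Nat.mod_two_eq_zero_or_one k with hk | hk
      · omega
      · have h0 : i.testBit 0 = true := h 0 (by simp [hk])
        simp only [Nat.testBit_zero, decide_eq_true_eq] at h0
        omega
    · rw [Nat.testBit_div_two] at ht ⊢
      exact h _ ht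
  · rintro ⟨h1, h2⟩ t ht
    cases t with
    | zero =>
      simp only [Nat.testBit_zero, decide_eq_true_eq] at ht ⊢
      omega
    | succ t =>
      rw [Nat.testBit_succ] at ht ⊢
      exact h2 t ht

lemma land_zero_parity (i j : ℕ) :
    i &&& j = 0 ↔ ((i % 2 = 0 ∨ j % 2 = 0) ∧ i / 2 &&& j / 2 = 0) := by
  have key : ∀ a b : ℕ, a &&& b = 0 ↔ ∀ t, ¬(a.testBit t = true ∧ b.testBit t = true) := by
    intro a b
    constructor
    · rintro h t ⟨ha, hb⟩
      have h2 := congrArg (fun x => Nat.testBit x t) h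
      simp [Nat.testBit_land, ha, hb] at h2
    · intro h
      apply Nat.eq_of_testBit_eq
      intro t
      rw [Nat.testBit_land, Nat.zero_testBit]
      cases ha : a.testBit t
      · simp
      · cases hb : b.testBit t
        · simp
        · exact absurd ⟨ha, hb⟩ (h t)
  rw [key, key]
  constructor
  · intro h
    refine ⟨?_, fun t ht => ?_⟩
    · by_contra hc
      push_neg at hc
      exact h 0 (by simp only [Nat.testBit_zero, decide_eq_true_eq]; omega)
    · rw [Nat.testBit_div_two, Nat.testBit_div_two] at ht
      exact h _ ht
  · rintro ⟨h1, h2⟩ t ht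
    cases t with
    | zero =>
      simp only [Nat.testBit_zero, decide_eq_true_eq] at ht
      omega
    | succ t =>
      rw [Nat.testBit_succ, Nat.testBit_succ] at ht
      exact h2 t ht

lemma s2_two_mul (i : ℕ) : s2 (2 * i) = s2 i := by
  rcases Nat.eq_zero_or_pos i with h | h
  · simp [h]
  · unfold s2
    rw [Nat.digits_def' (by norm_num : 1 < 2) (by omega)]
    have h1 : 2 * i % 2 = 0 := by omega
    have h2 : 2 * i / 2 = i := by omega
    rw [h1, h2, List.sum_cons]
    omega

lemma s2_two_mul_add_one (i : ℕ) : s2 (2 * i + 1) = s2 i + 1 := by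
  unfold s2
  rw [Nat.digits_def' (by norm_num : 1 < 2) (by omega)]
  have h1 : (2 * i + 1) % 2 = 1 := by omega
  have h2 : (2 * i + 1) / 2 = i := by omega
  rw [h1, h2, List.sum_cons]
  omega

lemma lucas_two (i : ℕ) : ∀ k, Nat.choose i k % 2 = if i &&& k = k then 1 else 0 := by
  induction i using Nat.strong_induction_on with
  | _ i IH =>
    intro k
    rcases Nat.eq_zero_or_pos i with hi | hi
    · subst hi
      cases k with
      | zero => simp
      | succ k => simp [Nat.choose, Nat.zero_and]
    · have step := @Choose.choose_modEq_choose_mod_mul_choose_div_nat i k 2 ⟨Nat.prime_two⟩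
      have IH2 := IH (i / 2) (by omega) (k / 2)
      have h1 : Nat.choose (i % 2) (k % 2) % 2 = if k % 2 ≤ i % 2 then 1 else 0 := by
        rcases Nat.mod_two_eq_zero_or_one i with hi2 | hi2 <;>
          rcases Nat.mod_two_eq_zero_or_one k with hk2 | hk2 <;>
            rw [hi2, hk2] <;> simp
      simp only [submask_parity i k]
      calc Nat.choose i k % 2
          = Nat.choose (i % 2) (k % 2) * Nat.choose (i / 2) (k / 2) % 2 := step
        _ = Nat.choose (i % 2) (k % 2) % 2 * (Nat.choose (i / 2) (k / 2) % 2) % 2 := by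
            rw [Nat.mul_mod]
        _ = _ := by
            rw [h1, IH2]
            by_cases hA : k % 2 ≤ i % 2 <;> by_cases hB : i / 2 &&& k / 2 = k / 2 <;>
              simp [hA, hB]

lemma kummer_two : ∀ N i j : ℕ, i + j ≤ N →
    Nat.choose (i + j) i % 2 = if i &&& j = 0 then 1 else 0 := by
  intro N
  induction N with
  | zero =>
    intro i j h
    have hi : i = 0 := by omega
    have hj : j = 0 := by omega
    subst hi; subst hj
    simp
  | succ N IH =>
    intro i j h
    rcases Nat.eq_zero_or_pos (i + j) with h0 | h0
    · have hi : i = 0 := by omega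
      have hj : j = 0 := by omega
      subst hi; subst hj
      simp
    · have step := @Choose.choose_modEq_choose_mod_mul_choose_div_nat (i + j) i 2 ⟨Nat.prime_two⟩
      have IH2 := IH (i / 2) (j / 2) (by omega)
      simp only [land_zero_parity i j]
      rcases Nat.mod_two_eq_zero_or_one i with hi2 | hi2 <;>
        rcases Nat.mod_two_eq_zero_or_one j with hj2 | hj2
      · have e1 : (i + j) % 2 = 0 := by omega
        have e2 : (i + j) / 2 = i / 2 + j / 2 := by omega
        rw [step, e1, e2, hi2, Nat.choose_self, one_mul, IH2]
        simp [hi2]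
      · have e1 : (i + j) % 2 = 1 := by omega
        have e2 : (i + j) / 2 = i / 2 + j / 2 := by omega
        rw [step, e1, e2, hi2, Nat.choose_zero_right, one_mul, IH2]
        simp [hi2]
      · have e1 : (i + j) % 2 = 1 := by omega
        have e2 : (i + j) / 2 = i / 2 + j / 2 := by omega
        rw [step, e1, e2, hi2]
        have : Nat.choose 1 1 = 1 := rfl
        rw [this, one_mul, IH2]
        simp [hj2]
      · have e1 : (i + j) % 2 = 0 := by omega
        rw [step, e1, hi2]
        have : Nat.choose 0 1 = 0 := rfl
        rw [this, zero_mul]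
        simp [hi2, hj2]

lemma sum_range_two_mul_int (f : ℕ → ℤ) (n : ℕ) :
    ∑ k ∈ Finset.range (2 * n), f k = ∑ i ∈ Finset.range n, (f (2 * i) + f (2 * i + 1)) := by
  induction n with
  | zero => simp
  | succ n ih =>
    rw [Finset.sum_range_succ, ← ih, show 2 * (n + 1) = 2 * n + 1 + 1 by ring,
      Finset.sum_range_succ, Finset.sum_range_succ]
    ring

lemma key_sum : ∀ m : ℕ, ∀ N : ℕ, m < N →
    (∑ k ∈ Finset.range N, if m &&& k = k then ((-1 : ℤ)) ^ (s2 k) else 0)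
      = if m = 0 then 1 else 0 := by
  intro m
  induction m using Nat.strong_induction_on with
  | _ m IH =>
    intro N hN
    rcases Nat.eq_zero_or_pos m with hm | hm
    · subst hm
      simp only [Nat.zero_and]
      rw [Finset.sum_ite_eq]
      simp [Finset.mem_range, hN, s2]
    · have tail : (∑ k ∈ Finset.range (2 * N), if m &&& k = k then ((-1 : ℤ)) ^ (s2 k) else 0)
          = ∑ k ∈ Finset.range N, if m &&& k = k then ((-1 : ℤ)) ^ (s2 k) else 0 := by
        rw [Finset.range_eq_Ico, ← Finset.sum_Ico_consecutive _ (Nat.zero_le N) (by omega : N ≤ 2 * N)]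
        have hz : (∑ k ∈ Finset.Ico N (2 * N), if m &&& k = k then ((-1 : ℤ)) ^ (s2 k) else 0) = 0 := by
          apply Finset.sum_eq_zero
          intro k hk
          rw [Finset.mem_Ico] at hk
          rw [if_neg]
          intro hc
          have : k ≤ m := hc ▸ Nat.and_le_left
          omega
        rw [hz, add_zero, ← Finset.range_eq_Ico]
      rw [← tail, sum_range_two_mul_int]
      have c1 : ∀ i : ℕ, (m &&& 2 * i = 2 * i) ↔ (m / 2 &&& i = i) := by
        intro i
        rw [submask_parity]
        have e1 : 2 * i % 2 = 0 := by omega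
        have e2 : 2 * i / 2 = i := by omega
        rw [e1, e2]
        simp
      have c2 : ∀ i : ℕ, (m &&& (2 * i + 1) = 2 * i + 1) ↔ (1 ≤ m % 2 ∧ m / 2 &&& i = i) := by
        intro i
        rw [submask_parity]
        have e1 : (2 * i + 1) % 2 = 1 := by omega
        have e2 : (2 * i + 1) / 2 = i := by omega
        rw [e1, e2]
      rcases Nat.mod_two_eq_zero_or_one m with hb | hb
      · have recur := IH (m / 2) (by omega) N (by omega)
        have hterm : ∀ i : ℕ,
            ((if m &&& 2 * i = 2 * i then ((-1 : ℤ)) ^ (s2 (2 * i)) else 0)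
              + if m &&& (2 * i + 1) = 2 * i + 1 then ((-1 : ℤ)) ^ (s2 (2 * i + 1)) else 0)
            = if m / 2 &&& i = i then ((-1 : ℤ)) ^ (s2 i) else 0 := by
          intro i
          have hB : ¬ (m &&& (2 * i + 1) = 2 * i + 1) := by rw [c2 i]; omega
          by_cases hc : m / 2 &&& i = i
          · rw [if_pos ((c1 i).mpr hc), if_neg hB, if_pos hc, s2_two_mul, add_zero]
          · rw [if_neg (fun h => hc ((c1 i).mp h)), if_neg hB, if_neg hc, add_zero]
        rw [Finset.sum_congr rfl (fun i _ => hterm i), recur]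
        have hm2 : m / 2 ≠ 0 := by omega
        rw [if_neg hm2, if_neg (by omega : ¬ m = 0)]
      · have hterm : ∀ i : ℕ,
            ((if m &&& 2 * i = 2 * i then ((-1 : ℤ)) ^ (s2 (2 * i)) else 0)
              + if m &&& (2 * i + 1) = 2 * i + 1 then ((-1 : ℤ)) ^ (s2 (2 * i + 1)) else 0)
            = 0 := by
          intro i
          by_cases hc : m / 2 &&& i = i
          · rw [if_pos ((c1 i).mpr hc), if_pos ((c2 i).mpr ⟨by omega, hc⟩),
              s2_two_mul, s2_two_mul_add_one, pow_succ]
            ring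
          · rw [if_neg (fun h => hc ((c1 i).mp h)),
              if_neg (fun h => hc ((c2 i).mp h).2), add_zero]
        rw [Finset.sum_congr rfl (fun i _ => hterm i)]
        simp
        omega

lemma submask_land (i j k : ℕ) : i &&& j &&& k = k ↔ (i &&& k = k ∧ j &&& k = k) := by
  simp only [submask_iff, Nat.testBit_land, Bool.and_eq_true]
  constructor
  · intro h
    exact ⟨fun t ht => (h t ht).1, fun t ht => (h t ht).2⟩
  · rintro ⟨h1, h2⟩ t ht
    exact ⟨h1 t ht, h2 t ht⟩

end aux

theorem det_M2_mod_two (n : ℕ) :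
    Matrix.det (fun i j : Fin n => ((Nat.choose ((i : ℕ) + j) i % 2 : ℕ) : ℤ))
      = ∏ k ∈ Finset.range n, (-1 : ℤ) ^ (s2 k) := by
  classical
  set L : Matrix (Fin n) (Fin n) ℤ := fun i k => ((Nat.choose (i : ℕ) (k : ℕ) % 2 : ℕ) : ℤ) with hLdef
  set d : Fin n → ℤ := fun k => (-1 : ℤ) ^ (s2 (k : ℕ)) with hddef
  have hM : (fun i j : Fin n => ((Nat.choose ((i : ℕ) + j) i % 2 : ℕ) : ℤ))
      = L * Matrix.diagonal d * L.transpose := by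
    ext i j
    rw [Matrix.mul_apply]
    simp only [Matrix.mul_diagonal, Matrix.transpose_apply]
    simp only [hLdef, hddef]
    have hLval : ∀ a b : Fin n,
        ((Nat.choose (a : ℕ) (b : ℕ) % 2 : ℕ) : ℤ) = if (a : ℕ) &&& (b : ℕ) = (b : ℕ) then 1 else 0 := by
      intro a b
      rw [lucas_two]
      split_ifs <;> simp
    have hKval : ((Nat.choose ((i : ℕ) + j) i % 2 : ℕ) : ℤ)
        = if (i : ℕ) &&& (j : ℕ) = 0 then 1 else 0 := by
      rw [kummer_two ((i : ℕ) + j) _ _ le_rfl]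
      split_ifs <;> simp
    rw [hKval]
    have hsum : (∑ k : Fin n, ((Nat.choose (i : ℕ) (k : ℕ) % 2 : ℕ) : ℤ) * (-1 : ℤ) ^ s2 (k : ℕ)
          * ((Nat.choose (j : ℕ) (k : ℕ) % 2 : ℕ) : ℤ))
        = ∑ k ∈ Finset.range n,
            if ((i : ℕ) &&& (j : ℕ)) &&& k = k then ((-1 : ℤ)) ^ (s2 k) else 0 := by
      rw [Finset.sum_range fun k => if ((i : ℕ) &&& (j : ℕ)) &&& k = k then ((-1 : ℤ)) ^ (s2 k) else 0]
      apply Finset.sum_congr rfl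
      intro k _
      rw [hLval i k, hLval j k]
      by_cases h1 : (i : ℕ) &&& (k : ℕ) = (k : ℕ) <;>
        by_cases h2 : (j : ℕ) &&& (k : ℕ) = (k : ℕ) <;>
          simp [h1, h2, submask_land]
    rw [hsum, key_sum _ n (by
      have : (i : ℕ) &&& (j : ℕ) ≤ (i : ℕ) := Nat.and_le_left
      omega)]
  rw [hM, Matrix.det_mul, Matrix.det_mul, Matrix.det_transpose, Matrix.det_diagonal]
  have hL : L.det = 1 := by
    have htri : L.BlockTriangular OrderDual.toDual := by
      intro a b hab
      have : (a : ℕ) < (b : ℕ) := hab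
      simp only [hLdef]
      rw [Nat.choose_eq_zero_of_lt this]
      simp
    rw [Matrix.det_of_lowerTriangular L htri]
    apply Finset.prod_eq_one
    intro a _
    simp [hLdef]
  rw [hL, one_mul, mul_one]
  rw [← Fin.prod_univ_eq_prod_range]
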